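/- Let X be a matroid on the finite ground set N = {1,…,n} and let β ∈ ℝ_+^n satisfy 0 ≤ β_1 < β_2 < … < β_n (Assumption A1). Let f ∈ ℤ_+ and define ψ(x) = max{ β^T y : y ∈ {0,1}^n, y ≤ 1 − x, Σ_{i=1}^n y_i ≤ f } for x ∈ {0,1}^n. Then every independent set of X of maximum total weight Σ_{i} β_i x_i minimizes ψ over all independent sets of X; that is, if x* ∈ {0,1}^n is the incidence vector of a maximum-weight independent set of X, then ψ(x*) = min{ ψ(x) : x is the incidence vector of an independent set of X }. -/

import Mathlib

/-- The follower's optimal value under a single capacity constraint `f`. -/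
noncomputable def psiSingle (n f : ℕ) (β : ℕ → ℝ) (x : ℕ → ℝ) : ℝ :=
  sSup {v : ℝ | ∃ y : ℕ → ℝ,
    (∀ i, y i = 0 ∨ y i = 1) ∧
    (∀ i, y i ≤ 1 - x i) ∧
    (∑ i ∈ Finset.Icc 1 n, y i ≤ (f : ℝ)) ∧
    v = ∑ i ∈ Finset.Icc 1 n, β i * y i}

/-- The incidence vector of a finite set of ground elements. -/
noncomputable def indVec (A : Finset ℕ) : ℕ → ℝ := fun i => if i ∈ A then 1 else 0

open Finset

/-- Characterization of the feasible value set of the follower's problem. -/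
lemma mem_psiSet_iff (n f : ℕ) (β : ℕ → ℝ) (A : Finset ℕ) (v : ℝ) :
    (v ∈ {v : ℝ | ∃ y : ℕ → ℝ,
      (∀ i, y i = 0 ∨ y i = 1) ∧
      (∀ i, y i ≤ 1 - indVec A i) ∧
      (∑ i ∈ Finset.Icc 1 n, y i ≤ (f : ℝ)) ∧
      v = ∑ i ∈ Finset.Icc 1 n, β i * y i}) ↔
    ∃ B : Finset ℕ, B ⊆ Finset.Icc 1 n \ A ∧ B.card ≤ f ∧ v = ∑ i ∈ B, β i := by
  classical
  constructor
  · rintro ⟨y, hy01, hyx, hysum, rfl⟩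
    refine ⟨(Finset.Icc 1 n).filter (fun i => y i = 1), ?_, ?_, ?_⟩
    · intro i hi
      rw [Finset.mem_filter] at hi
      rw [Finset.mem_sdiff]
      refine ⟨hi.1, fun hiA => ?_⟩
      have := hyx i
      rw [indVec] at this
      simp only [hiA, if_pos] at this
      rw [hi.2] at this
      norm_num at this
    · have hsum : (∑ i ∈ Finset.Icc 1 n, y i)
          = ((Finset.Icc 1 n).filter (fun i => y i = 1)).card := by
        rw [← Finset.sum_filter_add_sum_filter_not (Finset.Icc 1 n) (fun i => y i = 1)]
        have h1 : ∑ i ∈ (Finset.Icc 1 n).filter (fun i => y i = 1), y i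
            = ((Finset.Icc 1 n).filter (fun i => y i = 1)).card := by
          rw [Finset.sum_congr rfl (fun i hi => (Finset.mem_filter.1 hi).2)]
          simp
        have h2 : ∑ i ∈ (Finset.Icc 1 n).filter (fun i => ¬ y i = 1), y i = 0 := by
          refine Finset.sum_eq_zero (fun i hi => ?_)
          rcases hy01 i with h | h
          · exact h
          · exact absurd h (Finset.mem_filter.1 hi).2
        rw [h1, h2, add_zero]
      rw [hsum] at hysum
      exact_mod_cast hysum
    · rw [← Finset.sum_filter_add_sum_filter_not (Finset.Icc 1 n) (fun i => y i = 1)]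
      have h2 : ∑ i ∈ (Finset.Icc 1 n).filter (fun i => ¬ y i = 1), β i * y i = 0 := by
        refine Finset.sum_eq_zero (fun i hi => ?_)
        rcases hy01 i with h | h
        · rw [h, mul_zero]
        · exact absurd h (Finset.mem_filter.1 hi).2
      rw [h2, add_zero]
      refine Finset.sum_congr rfl (fun i hi => ?_)
      rw [(Finset.mem_filter.1 hi).2, mul_one]
  · rintro ⟨B, hB, hcard, rfl⟩
    refine ⟨indVec B, ?_, ?_, ?_, ?_⟩
    · intro i; rw [indVec]; split <;> simp
    · intro i
      rw [indVec, indVec]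
      by_cases hiB : i ∈ B
      · have hiA : i ∉ A := (Finset.mem_sdiff.1 (hB hiB)).2
        simp [hiB, hiA]
      · simp only [hiB, if_neg, not_false_iff]
        split <;> norm_num
    · have : (∑ i ∈ Finset.Icc 1 n, indVec B i) = B.card := by
        simp only [indVec]
        rw [Finset.sum_ite_mem]
        rw [Finset.inter_eq_right.2 (hB.trans (Finset.sdiff_subset))]
        simp
      rw [this]
      exact_mod_cast hcard
    · have : ∑ i ∈ Finset.Icc 1 n, β i * indVec B i = ∑ i ∈ B, β i := by
        simp only [indVec, mul_ite, mul_one, mul_zero]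
        rw [Finset.sum_ite_mem]
        rw [Finset.inter_eq_right.2 (hB.trans (Finset.sdiff_subset))]
      rw [this]

lemma psiSet_nonempty (n f : ℕ) (β : ℕ → ℝ) (A : Finset ℕ) :
    (0:ℝ) ∈ {v : ℝ | ∃ y : ℕ → ℝ,
      (∀ i, y i = 0 ∨ y i = 1) ∧
      (∀ i, y i ≤ 1 - indVec A i) ∧
      (∑ i ∈ Finset.Icc 1 n, y i ≤ (f : ℝ)) ∧
      v = ∑ i ∈ Finset.Icc 1 n, β i * y i} := by
  rw [mem_psiSet_iff]
  exact ⟨∅, by simp⟩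

lemma psiSet_bddAbove (n f : ℕ) (β : ℕ → ℝ) (hnn : ∀ i ∈ Finset.Icc 1 n, 0 ≤ β i)
    (A : Finset ℕ) :
    (∑ i ∈ Finset.Icc 1 n, β i) ∈
      upperBounds {v : ℝ | ∃ y : ℕ → ℝ,
      (∀ i, y i = 0 ∨ y i = 1) ∧
      (∀ i, y i ≤ 1 - indVec A i) ∧
      (∑ i ∈ Finset.Icc 1 n, y i ≤ (f : ℝ)) ∧
      v = ∑ i ∈ Finset.Icc 1 n, β i * y i} := by
  intro v hv
  rw [mem_psiSet_iff] at hv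
  obtain ⟨B, hB, _, rfl⟩ := hv
  exact Finset.sum_le_sum_of_subset_of_nonneg (hB.trans Finset.sdiff_subset)
    (fun i hi _ => hnn i hi)

lemma psi_mono (n f : ℕ) (β : ℕ → ℝ) (hnn : ∀ i ∈ Finset.Icc 1 n, 0 ≤ β i)
    (A1 A2 : Finset ℕ)
    (h : ∀ B : Finset ℕ, B ⊆ Finset.Icc 1 n \ A1 → B.card ≤ f →
      ∃ B' : Finset ℕ, B' ⊆ Finset.Icc 1 n \ A2 ∧ B'.card ≤ f ∧
        ∑ i ∈ B, β i ≤ ∑ i ∈ B', β i) :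
    psiSingle n f β (indVec A1) ≤ psiSingle n f β (indVec A2) := by
  unfold psiSingle
  apply csSup_le ⟨0, psiSet_nonempty n f β A1⟩
  intro v hv
  rw [mem_psiSet_iff] at hv
  obtain ⟨B, hB, hcard, rfl⟩ := hv
  obtain ⟨B', hB', hcard', hle⟩ := h B hB hcard
  refine hle.trans (le_csSup ⟨_, psiSet_bddAbove n f β hnn A2⟩ ?_)
  rw [mem_psiSet_iff]
  exact ⟨B', hB', hcard', rfl⟩

/-- Augmenting an independent set to full size inside a union. -/
lemma matroid_grow (X : Matroid ℕ) (J : Finset ℕ) (hJ : X.Indep ↑J) :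
    ∀ d (K : Finset ℕ), X.Indep ↑K → J.card ≤ K.card + d →
    ∃ K' : Finset ℕ, K ⊆ K' ∧ K' ⊆ K ∪ J ∧ X.Indep ↑K' ∧ J.card ≤ K'.card := by
  intro d
  induction d with
  | zero =>
    intro K hK hle
    exact ⟨K, Finset.Subset.refl K, Finset.subset_union_left, hK, by simpa using hle⟩
  | succ d ih =>
    intro K hK hle
    by_cases hcard : J.card ≤ K.card
    · exact ⟨K, Finset.Subset.refl K, Finset.subset_union_left, hK, hcard⟩
    · have henc : (↑K : Set ℕ).encard < (↑J : Set ℕ).encard := by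
        rw [Set.encard_coe_eq_coe_finsetCard, Set.encard_coe_eq_coe_finsetCard]
        exact_mod_cast Nat.lt_of_not_le hcard
      obtain ⟨e, he, hind⟩ := hK.augment hJ henc
      have heJ : e ∈ J := by simpa using he.1
      have heK : e ∉ K := by simpa using he.2
      have hind' : X.Indep ↑(insert e K) := by rw [Finset.coe_insert]; exact hind
      obtain ⟨K', h1, h2, h3, h4⟩ := ih (insert e K) hind'
        (by rw [Finset.card_insert_of_notMem heK]; omega)
      refine ⟨K', (Finset.subset_insert e K).trans h1, h2.trans ?_, h3, h4⟩
      exact Finset.union_subset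
        (Finset.insert_subset (Finset.mem_union_right _ heJ) Finset.subset_union_left)
        Finset.subset_union_right

/-- A maximum-weight independent set dominates every independent set in every
top segment `[m, n]` with `m ≥ 2`. -/
lemma filter_card_le_of_max (n : ℕ) (X : Matroid ℕ) (hE : X.E = ↑(Finset.Icc 1 n))
    (β : ℕ → ℝ) (hβ1 : 0 ≤ β 1)
    (hβstrict : ∀ i j : ℕ, 1 ≤ i → i < j → j ≤ n → β i < β j)
    (S : Finset ℕ) (hS : X.Indep ↑S)
    (hmax : ∀ A : Finset ℕ, X.Indep ↑A → ∑ i ∈ A, β i ≤ ∑ i ∈ S, β i)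
    (m : ℕ) (hm : 2 ≤ m) (A : Finset ℕ) (hA : X.Indep ↑A) :
    (A.filter (fun i => m ≤ i)).card ≤ (S.filter (fun i => m ≤ i)).card := by
  classical
  by_contra hlt
  push_neg at hlt
  set I := S.filter (fun i => m ≤ i) with hIdef
  set J := A.filter (fun i => m ≤ i) with hJdef
  have hSsub : S ⊆ Finset.Icc 1 n := by
    have := hS.subset_ground
    rw [hE] at this
    exact_mod_cast this
  have hAsub : A ⊆ Finset.Icc 1 n := by
    have := hA.subset_ground
    rw [hE] at this
    exact_mod_cast this
  have hI : X.Indep ↑I := hS.subset (by exact_mod_cast Finset.filter_subset _ _)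
  have hJ : X.Indep ↑J := hA.subset (by exact_mod_cast Finset.filter_subset _ _)
  have henc : (↑I : Set ℕ).encard < (↑J : Set ℕ).encard := by
    rw [Set.encard_coe_eq_coe_finsetCard, Set.encard_coe_eq_coe_finsetCard]
    exact_mod_cast hlt
  obtain ⟨e, he, hind⟩ := hI.augment hJ henc
  have heJ : e ∈ J := by simpa using he.1
  have heI : e ∉ I := by simpa using he.2
  have heA : e ∈ A := (Finset.mem_filter.1 heJ).1
  have hme : m ≤ e := (Finset.mem_filter.1 heJ).2
  have heS : e ∉ S := fun h => heI (Finset.mem_filter.2 ⟨h, hme⟩)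
  have hind' : X.Indep ↑(insert e I) := by rw [Finset.coe_insert]; exact hind
  obtain ⟨K', hK1, hK2, hK3, hK4⟩ := matroid_grow X S hS S.card (insert e I) hind'
    (by omega)
  have heK' : e ∈ K' := hK1 (Finset.mem_insert_self e I)
  have hK'sub : K' ⊆ insert e S := by
    refine hK2.trans ?_
    refine Finset.union_subset ?_ (Finset.subset_insert e S)
    exact Finset.insert_subset_insert e (Finset.filter_subset _ _)
  -- K'' = K' minus e, contained in S
  set K'' := K'.erase e with hK''def
  have hK''S : K'' ⊆ S := by
    intro x hx
    have hxK' : x ∈ K' := Finset.mem_of_mem_erase hx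
    have hxe : x ≠ e := Finset.ne_of_mem_erase hx
    rcases Finset.mem_insert.1 (hK'sub hxK') with h | h
    · exact absurd h hxe
    · exact h
  have hK''card : K''.card = K'.card - 1 := Finset.card_erase_of_mem heK'
  have hsumK' : ∑ i ∈ K', β i = β e + ∑ i ∈ K'', β i := by
    rw [hK''def, Finset.add_sum_erase _ _ heK']
  have hDsub : (S \ K'') ⊆ S := Finset.sdiff_subset
  have hsumS : ∑ i ∈ S, β i = ∑ i ∈ S \ K'', β i + ∑ i ∈ K'', β i :=
    (Finset.sum_sdiff hK''S).symm
  have hDcard : (S \ K'').card ≤ 1 := by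
    rw [Finset.card_sdiff_of_subset hK''S]
    have : K'.card ≤ K''.card + 1 := by omega
    omega
  have hβe : 0 < β e ∧ β e ≤ β e := by
    constructor
    · have h1e : (1:ℕ) < e := by omega
      have hen : e ≤ n := (Finset.mem_Icc.1 (hAsub heA)).2
      exact lt_of_le_of_lt hβ1 (hβstrict 1 e le_rfl h1e hen)
    · exact le_rfl
  have hg : ∀ g ∈ S \ K'', β g < β e := by
    intro g hg
    rw [Finset.mem_sdiff] at hg
    have hgS : g ∈ S := hg.1
    have hgK' : g ∉ K' := by
      intro h
      exact hg.2 (Finset.mem_erase.2 ⟨fun hge => heS (hge ▸ hgS), h⟩)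
    have hgI : g ∉ I := fun h => hgK' (hK1 (Finset.mem_insert_of_mem h))
    have hgm : ¬ m ≤ g := fun h => hgI (Finset.mem_filter.2 ⟨hgS, h⟩)
    have hg1 : 1 ≤ g := (Finset.mem_Icc.1 (hSsub hgS)).1
    have hen : e ≤ n := (Finset.mem_Icc.1 (hAsub heA)).2
    exact hβstrict g e hg1 (by omega) hen
  have hDlt : ∑ i ∈ S \ K'', β i < β e := by
    rcases Finset.eq_empty_or_nonempty (S \ K'') with h | h
    · rw [h, Finset.sum_empty]; exact hβe.1
    · obtain ⟨g, hgmem⟩ := h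
      have hcard1 : (S \ K'').card = 1 :=
        le_antisymm hDcard (Finset.card_pos.2 ⟨g, hgmem⟩)
      obtain ⟨g', hgeq⟩ := Finset.card_eq_one.1 hcard1
      rw [hgeq, Finset.sum_singleton]
      exact hg g' (hgeq ▸ Finset.mem_singleton_self g')
  have : ∑ i ∈ S, β i < ∑ i ∈ K', β i := by
    rw [hsumS, hsumK']
    linarith
  exact absurd (hmax K' hK3) (not_le.2 this)

/-- An independent set is no larger than a base. -/
lemma card_le_of_base (X : Matroid ℕ) (S : Finset ℕ) (hS : X.IsBase ↑S)
    (A : Finset ℕ) (hA : X.Indep ↑A) : A.card ≤ S.card := by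
  by_contra hlt
  push_neg at hlt
  have henc : (↑S : Set ℕ).encard < (↑A : Set ℕ).encard := by
    rw [Set.encard_coe_eq_coe_finsetCard, Set.encard_coe_eq_coe_finsetCard]
    exact_mod_cast hlt
  obtain ⟨e, he, hind⟩ := hS.indep.augment hA henc
  have : (↑S : Set ℕ) = insert e ↑S :=
    hS.eq_of_subset_indep hind (Set.subset_insert e ↑S)
  exact he.2 (by rw [this]; exact Set.mem_insert e _)

/-- Hall-type transfer lemma: if `C*` is dominated by `C` in every upper segment,
any subset of `C*` has a counterpart in `C` with at least the same weight. -/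
lemma exists_transfer (n : ℕ) (β : ℕ → ℝ)
    (hmono : ∀ i ∈ Finset.Icc 1 n, ∀ j ∈ Finset.Icc 1 n, i ≤ j → β i ≤ β j)
    (Cs C : Finset ℕ) (hCs : Cs ⊆ Finset.Icc 1 n) (hC : C ⊆ Finset.Icc 1 n)
    (hdom : ∀ m : ℕ, (Cs.filter (fun i => m ≤ i)).card ≤ (C.filter (fun i => m ≤ i)).card)
    (B : Finset ℕ) (hB : B ⊆ Cs) :
    ∃ B' : Finset ℕ, B' ⊆ C ∧ B'.card = B.card ∧ ∑ i ∈ B, β i ≤ ∑ i ∈ B', β i := by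
  classical
  set t : {x // x ∈ B} → Finset ℕ := fun b => C.filter (fun c => (b : ℕ) ≤ c) with ht
  have hall : ∀ s : Finset {x // x ∈ B}, s.card ≤ (s.biUnion t).card := by
    intro s
    rcases Finset.eq_empty_or_nonempty s with rfl | hs
    · simp
    · have hsim : (s.image Subtype.val).Nonempty := hs.image _
      set m := (s.image Subtype.val).min' hsim with hm
      have h1 : s.card = (s.image Subtype.val).card :=
        (Finset.card_image_of_injective s Subtype.val_injective).symm
      have h2 : s.image Subtype.val ⊆ B.filter (fun i => m ≤ i) := by
        intro x hx
        rw [Finset.mem_image] at hx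
        obtain ⟨b, hb, rfl⟩ := hx
        exact Finset.mem_filter.2 ⟨b.2, Finset.min'_le _ _ (Finset.mem_image_of_mem _ hb)⟩
      have h3 : (B.filter (fun i => m ≤ i)).card ≤ (Cs.filter (fun i => m ≤ i)).card :=
        Finset.card_le_card (Finset.filter_subset_filter _ hB)
      have h4 : (C.filter (fun i => m ≤ i)) ⊆ s.biUnion t := by
        intro c hc
        rw [Finset.mem_filter] at hc
        obtain ⟨b₀, hb₀, hval⟩ := Finset.mem_image.1 ((s.image Subtype.val).min'_mem hsim)
        refine Finset.mem_biUnion.2 ⟨b₀, hb₀, ?_⟩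
        rw [ht]
        exact Finset.mem_filter.2 ⟨hc.1, by rw [hval, ← hm]; exact hc.2⟩
      calc s.card = (s.image Subtype.val).card := h1
        _ ≤ (B.filter (fun i => m ≤ i)).card := Finset.card_le_card h2
        _ ≤ (Cs.filter (fun i => m ≤ i)).card := h3
        _ ≤ (C.filter (fun i => m ≤ i)).card := hdom m
        _ ≤ (s.biUnion t).card := Finset.card_le_card h4
  obtain ⟨φ, hinj, hmem⟩ := (Finset.all_card_le_biUnion_card_iff_exists_injective t).1 hall
  refine ⟨B.attach.image φ, ?_, ?_, ?_⟩
  · intro x hx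
    rw [Finset.mem_image] at hx
    obtain ⟨b, _, rfl⟩ := hx
    exact Finset.mem_of_mem_filter _ (hmem b)
  · rw [Finset.card_image_of_injective _ hinj, Finset.card_attach]
  · rw [Finset.sum_image (fun x _ y _ h => hinj h)]
    rw [← Finset.sum_attach B β]
    refine Finset.sum_le_sum (fun b _ => ?_)
    have hb1 : (b : ℕ) ∈ Finset.Icc 1 n := hCs (hB b.2)
    have hφ : φ b ∈ C.filter (fun c => (b : ℕ) ≤ c) := hmem b
    rw [Finset.mem_filter] at hφ
    exact hmono _ hb1 _ (hC hφ.1) hφ.2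

/-- Theorem 4: if `k_f = 1` and Assumption A1 holds
(`0 ≤ β_1 < β_2 < ⋯ < β_n`), then any maximum-weight independent set of the
leader's matroid `X` minimizes `ψ` over all independent sets of `X`. -/
theorem max_weight_indep_minimizes_psi (n : ℕ) (X : Matroid ℕ)
    (hE : X.E = ↑(Finset.Icc 1 n))
    (β : ℕ → ℝ) (hβ1 : 0 ≤ β 1)
    (hβstrict : ∀ i j : ℕ, 1 ≤ i → i < j → j ≤ n → β i < β j)
    (f : ℕ)
    (Astar : Finset ℕ) (hAstar : X.Indep ↑Astar)
    (hAmax : ∀ A : Finset ℕ, X.Indep ↑A → ∑ i ∈ A, β i ≤ ∑ i ∈ Astar, β i) :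
    psiSingle n f β (indVec Astar)
      = sInf {v : ℝ | ∃ A : Finset ℕ, X.Indep ↑A ∧ v = psiSingle n f β (indVec A)} := by
  classical
  have hnn : ∀ i ∈ Finset.Icc 1 n, 0 ≤ β i := by
    intro i hi
    rw [Finset.mem_Icc] at hi
    rcases Nat.eq_or_lt_of_le hi.1 with h | h
    · rw [← h]; exact hβ1
    · exact le_of_lt (lt_of_le_of_lt hβ1 (hβstrict 1 i le_rfl h hi.2))
  have hmono : ∀ i ∈ Finset.Icc 1 n, ∀ j ∈ Finset.Icc 1 n, i ≤ j → β i ≤ β j := by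
    intro i hi j hj hij
    rcases Nat.eq_or_lt_of_le hij with h | h
    · rw [h]
    · exact le_of_lt (hβstrict i j (Finset.mem_Icc.1 hi).1 h (Finset.mem_Icc.1 hj).2)
  -- extend Astar to a base S
  obtain ⟨Bset, hBbase, hABs⟩ := hAstar.exists_isBase_superset
  have hBsubE : Bset ⊆ ↑(Finset.Icc 1 n) := by
    rw [← hE]; exact hBbase.subset_ground
  have hBfin : Bset.Finite := Set.Finite.subset (Finset.Icc 1 n).finite_toSet hBsubE
  set S : Finset ℕ := hBfin.toFinset with hSdef
  have hScoe : (↑S : Set ℕ) = Bset := hBfin.coe_toFinset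
  have hSbase : X.IsBase ↑S := by rw [hScoe]; exact hBbase
  have hSindep : X.Indep ↑S := hSbase.indep
  have hAstarS : Astar ⊆ S := by
    rw [← Finset.coe_subset, hScoe]; exact hABs
  have hSsub : S ⊆ Finset.Icc 1 n := by
    rw [← Finset.coe_subset, hScoe]; exact_mod_cast hBsubE
  have hAstarsub : Astar ⊆ Finset.Icc 1 n := hAstarS.trans hSsub
  -- S has the same (maximum) weight as Astar
  have hwS : ∑ i ∈ S, β i = ∑ i ∈ Astar, β i := by
    refine le_antisymm (hAmax S hSindep) ?_
    exact Finset.sum_le_sum_of_subset_of_nonneg hAstarS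
      (fun i hi _ => hnn i (hSsub hi))
  have hSmax : ∀ A : Finset ℕ, X.Indep ↑A → ∑ i ∈ A, β i ≤ ∑ i ∈ S, β i := by
    intro A hA; rw [hwS]; exact hAmax A hA
  -- elements added to Astar have zero weight
  have hzero : ∀ d ∈ S \ Astar, β d = 0 := by
    have hsum0 : ∑ i ∈ S \ Astar, β i = 0 := by
      have := Finset.sum_sdiff hAstarS (f := β)
      rw [hwS] at this
      linarith [this]
    intro d hd
    have := (Finset.sum_eq_zero_iff_of_nonneg
      (fun i hi => hnn i (hSsub (Finset.mem_sdiff.1 hi).1))).1 hsum0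
    exact this d hd
  -- the key inequality
  have key : ∀ A : Finset ℕ, X.Indep ↑A →
      psiSingle n f β (indVec Astar) ≤ psiSingle n f β (indVec A) := by
    intro A hA
    have hAsub : A ⊆ Finset.Icc 1 n := by
      have := hA.subset_ground
      rw [hE] at this
      exact_mod_cast this
    -- dominance of complements
    have hAS : ∀ m : ℕ, (A.filter (fun i => m ≤ i)).card
        ≤ (S.filter (fun i => m ≤ i)).card := by
      intro m
      by_cases hm2 : 2 ≤ m
      · exact filter_card_le_of_max n X hE β hβ1 hβstrict S hSindep hSmax m hm2 A hA
      · have h1 : A.filter (fun i => m ≤ i) = A :=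
          Finset.filter_true_of_mem (fun x hx => by
            have := (Finset.mem_Icc.1 (hAsub hx)).1; omega)
        have h2 : S.filter (fun i => m ≤ i) = S :=
          Finset.filter_true_of_mem (fun x hx => by
            have := (Finset.mem_Icc.1 (hSsub hx)).1; omega)
        rw [h1, h2]
        exact card_le_of_base X S hSbase A hA
    have hdom : ∀ m : ℕ, (((Finset.Icc 1 n) \ S).filter (fun i => m ≤ i)).card
        ≤ (((Finset.Icc 1 n) \ A).filter (fun i => m ≤ i)).card := by
      intro m
      have hsplit : ∀ (T : Finset ℕ), ((Finset.Icc 1 n) \ T).filter (fun i => m ≤ i)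
          = ((Finset.Icc 1 n).filter (fun i => m ≤ i)) \ (T.filter (fun i => m ≤ i)) := by
        intro T
        ext x
        simp only [Finset.mem_filter, Finset.mem_sdiff]
        tauto
      rw [hsplit S, hsplit A,
        Finset.card_sdiff_of_subset (Finset.filter_subset_filter _ hSsub),
        Finset.card_sdiff_of_subset (Finset.filter_subset_filter _ hAsub)]
      exact Nat.sub_le_sub_left (hAS m) _
    -- split B into its part outside S, transfer via Hall
    apply psi_mono n f β hnn
    intro B hB hcard
    set B0 := B.filter (fun i => i ∉ S) with hB0def
    have hB0sub : B0 ⊆ Finset.Icc 1 n \ S := by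
      intro x hx
      rw [Finset.mem_filter] at hx
      exact Finset.mem_sdiff.2 ⟨(Finset.mem_sdiff.1 (hB hx.1)).1, hx.2⟩
    have hsumB : ∑ i ∈ B, β i = ∑ i ∈ B0, β i := by
      rw [hB0def, ← Finset.sum_filter_add_sum_filter_not B (fun i => i ∉ S)]
      have : ∑ i ∈ B.filter (fun i => ¬ i ∉ S), β i = 0 := by
        refine Finset.sum_eq_zero (fun i hi => ?_)
        rw [Finset.mem_filter, not_not] at hi
        refine hzero i (Finset.mem_sdiff.2 ⟨hi.2, ?_⟩)
        exact (Finset.mem_sdiff.1 (hB hi.1)).2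
      rw [this, add_zero]
    obtain ⟨B', hB'1, hB'2, hB'3⟩ := exists_transfer n β hmono
      ((Finset.Icc 1 n) \ S) ((Finset.Icc 1 n) \ A)
      Finset.sdiff_subset Finset.sdiff_subset hdom B0 hB0sub
    refine ⟨B', hB'1, ?_, ?_⟩
    · rw [hB'2]
      exact le_trans (Finset.card_le_card (Finset.filter_subset _ _)) hcard
    · rw [hsumB]; exact hB'3
  -- assemble
  have hmem : psiSingle n f β (indVec Astar) ∈
      {v : ℝ | ∃ A : Finset ℕ, X.Indep ↑A ∧ v = psiSingle n f β (indVec A)} :=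
    ⟨Astar, hAstar, rfl⟩
  refine le_antisymm ?_ ?_
  · refine le_csInf ⟨_, hmem⟩ ?_
    rintro v ⟨A, hA, rfl⟩
    exact key A hA
  · refine csInf_le ⟨psiSingle n f β (indVec Astar), ?_⟩ hmem
    rintro v ⟨A, hA, rfl⟩
    exact key A hA
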